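/- Let k ≥ 2 and m ≥ 2 be integers and set d = k·m and n = m + 1. Then the following n partitions of d are NOT realized by permutations: (k, k, …, k) (m copies of k); (k, k, …, k) (m copies of k); (m + 1, 1, …, 1) with d − m − 1 ones; and m − 2 copies of (2, 1, …, 1) with d − 2 ones each. -/

import Mathlib

/-- Multiset of cycle lengths of a permutation of a finite type, counting each
fixed point as a cycle of length 1. -/
def fullCycleType {α : Type*} [Fintype α] [DecidableEq α] (τ : Equiv.Perm α) :
    Multiset ℕ :=
  τ.cycleType + Multiset.replicate (Fintype.card α - τ.cycleType.sum) 1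

/-- The `n` partitions `parts 0, …, parts (n-1)` of `d` are realized by permutations:
there are `τ₁, …, τₙ ∈ S_d` with `τ₁ ⋯ τₙ = 1`, generating a subgroup acting
transitively on `{1, …, d}`, where the multiset of cycle lengths of `τᵢ`
(fixed points counting as cycles of length 1) is `parts i`. -/
def realizable (d n : ℕ) (parts : Fin n → Multiset ℕ) : Prop :=
  ∃ τ : Fin n → Equiv.Perm (Fin d),
    (List.ofFn τ).prod = 1 ∧
    (∀ x y : Fin d, ∃ g ∈ Subgroup.closure (Set.range τ), g x = y) ∧
    ∀ i, fullCycleType (τ i) = parts i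


open Equiv Equiv.Perm Relation

set_option linter.unusedSectionVars false

namespace Stmt14

variable {Y : Type*} [Fintype Y] [DecidableEq Y]

def pairedRel (s : Setoid Y) (a b : Y) : Y → Y → Prop :=
  fun x y => s x y ∨ (x = a ∧ y = b) ∨ (x = b ∧ y = a)

def addPair (s : Setoid Y) (a b : Y) : Setoid Y := EqvGen.setoid (pairedRel s a b)

lemma addPair_def {s : Setoid Y} {a b x y : Y} :
    (addPair s a b) x y ↔ EqvGen (pairedRel s a b) x y := Iff.rfl

lemma le_addPair (s : Setoid Y) (a b : Y) : s ≤ addPair s a b := by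
  rw [Setoid.le_def]
  intro x y h
  exact EqvGen.rel _ _ (Or.inl h)

lemma addPair_rel_ab (s : Setoid Y) (a b : Y) : (addPair s a b) a b :=
  EqvGen.rel _ _ (Or.inr (Or.inl ⟨rfl, rfl⟩))

/-- structure lemma (A0) -/
lemma addPair_iff {s : Setoid Y} {a b : Y} {x y : Y} :
    (addPair s a b) x y ↔
      s x y ∨ (s x a ∧ s b y) ∨ (s x b ∧ s a y) := by
  constructor
  · intro h
    rw [addPair_def] at h
    induction h with
    | rel u v h =>
      rcases h with h | ⟨rfl, rfl⟩ | ⟨rfl, rfl⟩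
      · exact Or.inl h
      · exact Or.inr (Or.inl ⟨s.refl _, s.refl _⟩)
      · exact Or.inr (Or.inr ⟨s.refl _, s.refl _⟩)
    | refl u => exact Or.inl (s.refl _)
    | symm u v h ih =>
      rcases ih with h1 | ⟨h1, h2⟩ | ⟨h1, h2⟩
      · exact Or.inl (s.symm h1)
      · exact Or.inr (Or.inr ⟨s.symm h2, s.symm h1⟩)
      · exact Or.inr (Or.inl ⟨s.symm h2, s.symm h1⟩)
    | trans u v w h1 h2 ih1 ih2 =>
      rcases ih1 with p1 | ⟨p1, p2⟩ | ⟨p1, p2⟩ <;>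
        rcases ih2 with q1 | ⟨q1, q2⟩ | ⟨q1, q2⟩
      · exact Or.inl (s.trans p1 q1)
      · exact Or.inr (Or.inl ⟨s.trans p1 q1, q2⟩)
      · exact Or.inr (Or.inr ⟨s.trans p1 q1, q2⟩)
      · exact Or.inr (Or.inl ⟨p1, s.trans p2 q1⟩)
      · exact Or.inl (s.trans p1 (s.trans (s.symm (s.trans p2 q1)) q2))
      · exact Or.inl (s.trans p1 q2)
      · exact Or.inr (Or.inr ⟨p1, s.trans p2 q1⟩)
      · exact Or.inl (s.trans p1 q2)
      · exact Or.inl (s.trans p1 (s.trans (s.symm (s.trans p2 q1)) q2))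
  · intro h
    have hle : ∀ {x y : Y}, s x y → (addPair s a b) x y :=
      fun h => EqvGen.rel _ _ (Or.inl h)
    have hab := addPair_rel_ab s a b
    rcases h with h | ⟨h1, h2⟩ | ⟨h1, h2⟩
    · exact hle h
    · exact (addPair s a b).trans (hle h1) ((addPair s a b).trans hab (hle h2))
    · exact (addPair s a b).trans (hle h1)
        ((addPair s a b).trans ((addPair s a b).symm hab) (hle h2))

/-- (A2) -/
lemma addPair_eq_self {s : Setoid Y} {a b : Y} (h : s a b) : addPair s a b = s := by
  refine le_antisymm ?_ (le_addPair s a b)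
  rw [Setoid.le_def]
  intro x y hxy
  rcases addPair_iff.mp hxy with h1 | ⟨h1, h2⟩ | ⟨h1, h2⟩
  · exact h1
  · exact s.trans h1 (s.trans h h2)
  · exact s.trans h1 (s.trans (s.symm h) h2)

noncomputable instance (s : Setoid Y) : Fintype (Quotient s) :=
  Fintype.ofFinite _

/-- pushforward of quotients along setoid inequality -/
def qmap {s u : Setoid Y} (h : s ≤ u) : Quotient s → Quotient u :=
  Quotient.map' id (fun _ _ hxy => Setoid.le_def.mp h hxy)

lemma qmap_surjective {s u : Setoid Y} (h : s ≤ u) : Function.Surjective (qmap h) := by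
  intro q
  obtain ⟨x, rfl⟩ := Quotient.exists_rep q
  exact ⟨Quotient.mk _ x, rfl⟩

lemma card_le_of_setoid_le {s u : Setoid Y} (h : s ≤ u) :
    Nat.card (Quotient u) ≤ Nat.card (Quotient s) :=
  Nat.card_le_card_of_surjective _ (qmap_surjective h)

lemma qmap_eq_iff {s u : Setoid Y} (h : s ≤ u) (x y : Y) :
    qmap h (Quotient.mk s x) = qmap h (Quotient.mk s y) ↔ u x y := by
  constructor
  · intro hq
    have : (Quotient.mk u x) = Quotient.mk u y := hq
    exact Quotient.eq''.mp this
  · intro hu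
    exact Quotient.sound' hu

/-- (A1) -/
lemma card_addPair_ge (s : Setoid Y) (a b : Y) :
    Nat.card (Quotient s) ≤ Nat.card (Quotient (addPair s a b)) + 1 := by
  classical
  have h := le_addPair s a b
  rw [Nat.card_eq_fintype_card, Nat.card_eq_fintype_card]
  have key : ∀ u v : Quotient s, qmap h u = qmap h v →
      u = v ∨ (u = Quotient.mk s a ∨ u = Quotient.mk s b) ∧
        (v = Quotient.mk s a ∨ v = Quotient.mk s b) := by
    intro u v
    induction u using Quotient.inductionOn' with | h x =>
    induction v using Quotient.inductionOn' with | h y =>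
    intro hq
    have hxy : (addPair s a b) x y := (qmap_eq_iff h x y).mp hq
    rcases addPair_iff.mp hxy with h1 | ⟨h1, h2⟩ | ⟨h1, h2⟩
    · exact Or.inl (Quotient.sound' h1)
    · exact Or.inr ⟨Or.inl (Quotient.sound' h1), Or.inr (Quotient.sound' (s.symm h2))⟩
    · exact Or.inr ⟨Or.inr (Quotient.sound' h1), Or.inl (Quotient.sound' (s.symm h2))⟩
  -- injective on univ.erase ⟦a⟧
  have hinj : Set.InjOn (qmap h)
      ((Finset.univ.erase (Quotient.mk s a) : Finset (Quotient s)) : Set (Quotient s)) := by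
    intro u hu v hv huv
    rcases key u v huv with h1 | ⟨h1, h2⟩
    · exact h1
    · rcases h1 with h1 | h1
      · exact absurd h1 (Finset.ne_of_mem_erase hu)
      · rcases h2 with h2 | h2
        · exact absurd h2 (Finset.ne_of_mem_erase hv)
        · rw [h1, h2]
  have hcard := Finset.card_le_card_of_injOn (qmap h)
      (fun q _ => Finset.mem_univ _) hinj
  have : (Finset.univ.erase (Quotient.mk s a)).card =
      Fintype.card (Quotient s) - 1 := by
    rw [Finset.card_erase_of_mem (Finset.mem_univ _), Finset.card_univ]
  rw [this, Finset.card_univ] at hcard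
  have h1 : 1 ≤ Fintype.card (Quotient s) := Fintype.card_pos_iff.mpr ⟨Quotient.mk s a⟩
  omega

/-- (A3) -/
lemma card_addPair_lt {s : Setoid Y} {a b : Y} (hab : ¬ s a b) :
    Nat.card (Quotient (addPair s a b)) < Nat.card (Quotient s) := by
  classical
  have h := le_addPair s a b
  rw [Nat.card_eq_fintype_card, Nat.card_eq_fintype_card]
  refine Fintype.card_lt_of_surjective_not_injective _ (qmap_surjective h) ?_
  intro hinj
  have : qmap h (Quotient.mk s a) = qmap h (Quotient.mk s b) :=
    (qmap_eq_iff h a b).mpr (addPair_rel_ab s a b)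
  exact hab (Quotient.eq''.mp (hinj this))



/-! ### Part B/C : single permutation cycle counting -/

def permSetoid (σ : Perm Y) : Setoid Y := ⟨σ.SameCycle, SameCycle.equivalence σ⟩

noncomputable def cycQ (σ : Perm Y) : ℕ := Nat.card (Quotient (permSetoid σ))

def setoidStab (s : Setoid Y) : Subgroup (Perm Y) where
  carrier := {g | ∀ x, s x (g x)}
  one_mem' := fun x => s.refl x
  mul_mem' := @fun g h hg hh x => s.trans (hh x) (hg (h x))
  inv_mem' := @fun g hg x => by
    have := hg (g⁻¹ x)
    rw [← Equiv.Perm.mul_apply, mul_inv_cancel, Equiv.Perm.one_apply] at this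
    exact s.symm this

lemma mem_setoidStab_iff {s : Setoid Y} {g : Perm Y} :
    g ∈ setoidStab s ↔ ∀ x, s x (g x) := Iff.rfl

lemma setoidStab_mono {s u : Setoid Y} (h : s ≤ u) : setoidStab s ≤ setoidStab u :=
  fun g hg x => Setoid.le_def.mp h (hg x)

lemma rel_of_mem_stab {s : Setoid Y} {σ : Perm Y} (hσ : σ ∈ setoidStab s) {x y : Y}
    (h : σ.SameCycle x y) : s x y := by
  obtain ⟨i, hi⟩ := h
  have : σ ^ i ∈ setoidStab s := zpow_mem hσ i
  have := this x
  rwa [hi] at this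

lemma self_mem_stab (σ : Perm Y) : σ ∈ setoidStab (permSetoid σ) :=
  fun x => ⟨1, by simp⟩

lemma swap_mem_stab {s : Setoid Y} {a b : Y} (h : s a b) : Equiv.swap a b ∈ setoidStab s := by
  intro x
  rcases eq_or_ne x a with rfl | hxa
  · rwa [Equiv.swap_apply_left]
  rcases eq_or_ne x b with rfl | hxb
  · rw [Equiv.swap_apply_right]; exact s.symm h
  · rw [Equiv.swap_apply_of_ne_of_ne hxa hxb]

lemma addPair_le {s u : Setoid Y} {a b : Y} (h1 : s ≤ u) (h2 : u a b) :
    addPair s a b ≤ u := by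
  rw [Setoid.le_def]
  intro x y hxy
  rcases addPair_iff.mp hxy with h | ⟨p1, p2⟩ | ⟨p1, p2⟩
  · exact Setoid.le_def.mp h1 h
  · exact u.trans (Setoid.le_def.mp h1 p1) (u.trans h2 (Setoid.le_def.mp h1 p2))
  · exact u.trans (Setoid.le_def.mp h1 p1) (u.trans (u.symm h2) (Setoid.le_def.mp h1 p2))

/-- the join setoid -/
noncomputable def permJoin (σ : Perm Y) (a b : Y) : Setoid Y := addPair (permSetoid σ) a b

lemma swap_mul_mem_stab_join (σ : Perm Y) (a b : Y) :
    Equiv.swap a b * σ ∈ setoidStab (permJoin σ a b) :=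
  mul_mem (swap_mem_stab (addPair_rel_ab _ a b))
    (setoidStab_mono (le_addPair _ a b) (self_mem_stab σ))

lemma permSetoid_swap_mul_le_join (σ : Perm Y) (a b : Y) :
    permSetoid (Equiv.swap a b * σ) ≤ permJoin σ a b := by
  rw [Setoid.le_def]
  intro x y h
  exact rel_of_mem_stab (swap_mul_mem_stab_join σ a b) h

lemma permJoin_eq (σ : Perm Y) (a b : Y) :
    permJoin (Equiv.swap a b * σ) a b = permJoin σ a b := by
  apply le_antisymm
  · refine addPair_le ?_ (addPair_rel_ab _ a b)
    exact permSetoid_swap_mul_le_join σ a b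
  · refine addPair_le ?_ (addPair_rel_ab _ a b)
    rw [Setoid.le_def]
    intro x y h
    have hσ : σ ∈ setoidStab (permJoin (Equiv.swap a b * σ) a b) := by
      have h1 : Equiv.swap a b ∈ setoidStab (permJoin (Equiv.swap a b * σ) a b) :=
        swap_mem_stab (addPair_rel_ab _ a b)
      have h2 : Equiv.swap a b * σ ∈ setoidStab (permJoin (Equiv.swap a b * σ) a b) :=
        setoidStab_mono (le_addPair _ a b) (self_mem_stab _)
      have := mul_mem h1 h2
      rwa [Equiv.swap_mul_self_mul] at this
    exact rel_of_mem_stab hσ h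

/-- (d) -/
lemma cycQ_le_swap_mul_add_one (σ : Perm Y) (a b : Y) :
    cycQ σ ≤ cycQ (Equiv.swap a b * σ) + 1 := by
  have h1 : Nat.card (Quotient (permJoin σ a b)) ≤ cycQ (Equiv.swap a b * σ) :=
    card_le_of_setoid_le (permSetoid_swap_mul_le_join σ a b)
  have h2 : cycQ σ ≤ Nat.card (Quotient (permJoin σ a b)) + 1 :=
    card_addPair_ge (permSetoid σ) a b
  omega

/-- split : if same cycle, cycQ grows -/
lemma cycQ_le_swap_mul_of_sameCycle {σ : Perm Y} {a b : Y} (h : σ.SameCycle a b) :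
    cycQ σ ≤ cycQ (Equiv.swap a b * σ) := by
  have h1 : Nat.card (Quotient (permJoin σ a b)) ≤ cycQ (Equiv.swap a b * σ) :=
    card_le_of_setoid_le (permSetoid_swap_mul_le_join σ a b)
  have h2 : permJoin σ a b = permSetoid σ := addPair_eq_self h
  rwa [h2] at h1

/-- merge : if not same cycle, cycQ does not grow -/
lemma cycQ_swap_mul_le_of_not_sameCycle {σ : Perm Y} {a b : Y} (h : ¬ σ.SameCycle a b) :
    cycQ (Equiv.swap a b * σ) ≤ cycQ σ := by
  have h1 : cycQ (Equiv.swap a b * σ) ≤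
      Nat.card (Quotient (permJoin (Equiv.swap a b * σ) a b)) + 1 :=
    card_addPair_ge (permSetoid (Equiv.swap a b * σ)) a b
  have h1 : cycQ (Equiv.swap a b * σ) ≤
      Nat.card (Quotient (permJoin σ a b)) + 1 := by
    rwa [permJoin_eq] at h1
  have h2 : Nat.card (Quotient (permJoin σ a b)) < cycQ σ := card_addPair_lt h
  omega

/-- bridge -/
lemma cycQ_add_support (σ : Perm Y) :
    cycQ σ + σ.support.card = Multiset.card σ.cycleType + Fintype.card Y := by
  classical
  have hfun : ∀ x : Y, x ∈ σ.support ∨ x ∈ σ.supportᶜ := by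
    intro x; rcases em (x ∈ σ.support) with h | h
    · exact Or.inl h
    · exact Or.inr (Finset.mem_compl.mpr h)
  let F : Y → (↥(σ.supportᶜ) ⊕ ↥σ.cycleFactorsFinset) := fun x =>
    if h : x ∈ σ.support then
      Sum.inr ⟨σ.cycleOf x, cycleOf_mem_cycleFactorsFinset_iff.mpr h⟩
    else Sum.inl ⟨x, Finset.mem_compl.mpr h⟩
  have hresp : ∀ x y : Y, σ.SameCycle x y → F x = F y := by
    intro x y h
    by_cases hx : x ∈ σ.support
    · have hy : y ∈ σ.support := h.mem_support_iff.mp hx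
      simp only [F, dif_pos hx, dif_pos hy]
      exact congrArg _ (Subtype.ext h.cycleOf_eq)
    · have hy : y ∉ σ.support := fun hy => hx (h.mem_support_iff.mpr hy)
      have hxy : x = y := h.eq_of_left (notMem_support.mp hx)
      simp [F, dif_neg hx, dif_neg hy, hxy]
  let Fq : Quotient (permSetoid σ) → (↥(σ.supportᶜ) ⊕ ↥σ.cycleFactorsFinset) :=
    Quotient.lift F (hresp · ·)
  have hbij : Function.Bijective Fq := by
    constructor
    · intro u v
      induction u using Quotient.inductionOn' with | h x =>
      induction v using Quotient.inductionOn' with | h y =>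
      intro hF
      have hF : F x = F y := hF
      by_cases hx : x ∈ σ.support <;> by_cases hy : y ∈ σ.support
      · simp only [F, dif_pos hx, dif_pos hy] at hF
        have hco : σ.cycleOf x = σ.cycleOf y := Subtype.ext_iff.mp (Sum.inr.inj hF)
        apply Quotient.sound'
        have h1 : y ∈ (σ.cycleOf y).support :=
          mem_support_cycleOf_iff.mpr ⟨SameCycle.rfl, hy⟩
        rw [← hco] at h1
        exact (mem_support_cycleOf_iff.mp h1).1
      · rw [show F x = Sum.inr ⟨σ.cycleOf x, cycleOf_mem_cycleFactorsFinset_iff.mpr hx⟩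
            from dif_pos hx,
          show F y = Sum.inl ⟨y, Finset.mem_compl.mpr hy⟩ from dif_neg hy] at hF
        exact absurd hF (by simp)
      · rw [show F x = Sum.inl ⟨x, Finset.mem_compl.mpr hx⟩ from dif_neg hx,
          show F y = Sum.inr ⟨σ.cycleOf y, cycleOf_mem_cycleFactorsFinset_iff.mpr hy⟩
            from dif_pos hy] at hF
        exact absurd hF (by simp)
      · simp only [F, dif_neg hx, dif_neg hy, Sum.inl.injEq] at hF
        have : x = y := Subtype.ext_iff.mp hF
        exact Quotient.sound' (this ▸ SameCycle.rfl)
    · rintro (⟨x, hx⟩ | ⟨c, hc⟩)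
      · refine ⟨Quotient.mk _ x, ?_⟩
        have hx' : x ∉ σ.support := Finset.mem_compl.mp hx
        exact dif_neg hx'
      · obtain ⟨hcyc, hcm⟩ := mem_cycleFactorsFinset_iff.mp hc
        obtain ⟨x, hx, -⟩ := hcyc
        have hxc : x ∈ c.support := mem_support.mpr hx
        have hxs : x ∈ σ.support := by
          rw [mem_support, ← hcm x hxc]
          exact hx
        refine ⟨Quotient.mk _ x, ?_⟩
        show F x = _
        rw [show F x = Sum.inr ⟨σ.cycleOf x, cycleOf_mem_cycleFactorsFinset_iff.mpr hxs⟩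
          from dif_pos hxs]
        exact congrArg Sum.inr (Subtype.ext (cycle_is_cycleOf hxc hc).symm)
  have hcard : cycQ σ = Nat.card (↥(σ.supportᶜ) ⊕ ↥σ.cycleFactorsFinset) :=
    Nat.card_congr (Equiv.ofBijective _ hbij)
  rw [Nat.card_sum, Nat.card_eq_fintype_card, Nat.card_eq_fintype_card,
    Fintype.card_coe, Fintype.card_coe, Finset.card_compl] at hcard
  have h1 : Multiset.card σ.cycleType = σ.cycleFactorsFinset.card := by
    rw [cycleType_def, Multiset.card_map]
    rfl
  have h2 : σ.support.card ≤ Fintype.card Y := by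
    simpa using Finset.card_le_card (Finset.subset_univ σ.support)
  omega

/-- parity -/
lemma cycQ_swap_mul_ne {σ : Perm Y} {a b : Y} (hab : a ≠ b) :
    cycQ (Equiv.swap a b * σ) ≠ cycQ σ := by
  intro heq
  have hb1 := cycQ_add_support (Equiv.swap a b * σ)
  have hb2 := cycQ_add_support σ
  set S1 := (Equiv.swap a b * σ).support.card
  set S2 := σ.support.card
  set T1 := Multiset.card (Equiv.swap a b * σ).cycleType
  set T2 := Multiset.card σ.cycleType
  have hsum : S1 + T2 = S2 + T1 := by omega
  have hs1 : sign (Equiv.swap a b * σ) = -sign σ := by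
    rw [Equiv.Perm.sign_mul, sign_swap hab, neg_mul, one_mul]
  have hsign1 : sign (Equiv.swap a b * σ) = (-1 : ℤˣ) ^ (S1 + T1) := by
    rw [sign_of_cycleType, sum_cycleType]
  have hsign2 : sign σ = (-1 : ℤˣ) ^ (S2 + T2) := by
    rw [sign_of_cycleType, sum_cycleType]
  have hpow : ∀ n : ℕ, ((-1 : ℤˣ)) ^ n = (-1) ^ (n % 2) := by
    intro n
    conv_lhs => rw [← Nat.div_add_mod n 2]
    rw [pow_add, pow_mul]
    norm_num
  have hmod : (S1 + T1) % 2 = (S2 + T2) % 2 := by omega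
  rw [hsign1, hsign2, hpow (S1 + T1), hpow (S2 + T2), hmod] at hs1
  rcases Int.units_eq_one_or ((-1 : ℤˣ) ^ ((S2 + T2) % 2)) with h | h <;>
    rw [h] at hs1 <;> exact absurd hs1 (by decide)

lemma cycQ_one : cycQ (1 : Perm Y) = Fintype.card Y := by
  have : Multiset.card (1 : Perm Y).cycleType = 0 := by
    simp [card_cycleType_eq_zero]
  have h := cycQ_add_support (1 : Perm Y)
  rw [support_one] at h
  simpa [this] using h

/-- factorization into at most `card Y - cycQ g` swaps -/
lemma exists_swap_list : ∀ (n : ℕ) (g : Perm Y), g.support.card ≤ n →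
    ∃ l : List (Perm Y), (∀ t ∈ l, t.IsSwap) ∧ l.prod = g ∧
      l.length + cycQ g ≤ Fintype.card Y := by
  intro n
  induction n with
  | zero =>
    intro g hg
    have : g = 1 := card_support_eq_zero.mp (Nat.le_zero.mp hg)
    subst this
    exact ⟨[], by simp, by simp, by simp [cycQ_one]⟩
  | succ n ih =>
    intro g hg
    rcases eq_or_ne g 1 with rfl | hg1
    · exact ⟨[], by simp, by simp, by simp [cycQ_one]⟩
    · have : ¬ ∀ x, g x = x := fun h => hg1 (Equiv.ext h)
      push_neg at this
      obtain ⟨x, hx⟩ := this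
      have hxgx : x ≠ g x := fun h => hx h.symm
      have hlt : (Equiv.swap x (g x) * g).support.card < g.support.card :=
        card_support_swap_mul hx
      obtain ⟨l', hsw, hprod, hlen⟩ := ih (Equiv.swap x (g x) * g) (by omega)
      refine ⟨Equiv.swap x (g x) :: l', ?_, ?_, ?_⟩
      · intro t ht
        rcases List.mem_cons.mp ht with rfl | ht
        · exact ⟨x, g x, hxgx, rfl⟩
        · exact hsw t ht
      · rw [List.prod_cons, hprod, Equiv.swap_mul_self_mul]
      · have hsc : g.SameCycle x (g x) := ⟨1, by simp⟩
        have h1 := cycQ_le_swap_mul_of_sameCycle hsc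
        have h2 := cycQ_swap_mul_ne (σ := g) hxgx
        simp only [List.length_cons]
        omega

/-! ### Part D : swap lists and the Ree inequality -/

lemma eqvGen_le {r : Y → Y → Prop} {u : Setoid Y} (h : ∀ x y, r x y → u x y) :
    EqvGen.setoid r ≤ u := by
  rw [Setoid.le_def]
  intro x y hxy
  induction hxy with
  | rel p q hpq => exact h _ _ hpq
  | refl p => exact u.refl p
  | symm p q _ ih => exact u.symm ih
  | trans p q w _ _ ih1 ih2 => exact u.trans ih1 ih2

def swapRel (L : List (Perm Y)) : Y → Y → Prop := fun x y => ∃ τ ∈ L, τ x = y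

def swapSetoid (L : List (Perm Y)) : Setoid Y := EqvGen.setoid (swapRel L)

noncomputable def orbCount (L : List (Perm Y)) : ℕ := Nat.card (Quotient (swapSetoid L))

lemma card_quotient_of_rel_eq {s : Setoid Y} (h : ∀ x y : Y, s x y → x = y) :
    Nat.card (Quotient s) = Fintype.card Y := by
  rw [← Nat.card_eq_fintype_card]
  have hbij : Function.Bijective (fun x : Y => Quotient.mk s x) := by
    constructor
    · intro x y hxy
      exact h x y (Quotient.eq''.mp hxy)
    · intro q
      obtain ⟨x, rfl⟩ := Quotient.exists_rep q
      exact ⟨x, rfl⟩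
  exact Nat.card_congr (Equiv.ofBijective _ hbij).symm

lemma orbCount_nil : orbCount ([] : List (Perm Y)) = Fintype.card Y := by
  apply card_quotient_of_rel_eq
  intro x y hxy
  induction hxy with
  | rel p q hpq => obtain ⟨τ, hτ, _⟩ := hpq; exact absurd hτ List.not_mem_nil
  | refl p => rfl
  | symm p q _ ih => exact ih.symm
  | trans p q w _ _ ih1 ih2 => exact ih1.trans ih2

lemma mem_stab_of_mem {L : List (Perm Y)} {τ : Perm Y} (hτ : τ ∈ L) :
    τ ∈ setoidStab (swapSetoid L) :=
  fun x => EqvGen.rel _ _ ⟨τ, hτ, rfl⟩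

lemma prod_mem_stab {L l : List (Perm Y)} (h : ∀ τ ∈ l, τ ∈ L) :
    l.prod ∈ setoidStab (swapSetoid L) :=
  list_prod_mem (fun τ hτ => mem_stab_of_mem (h τ hτ))

lemma swapSetoid_cons {L : List (Perm Y)} {a b : Y} :
    swapSetoid (Equiv.swap a b :: L) = addPair (swapSetoid L) a b := by
  apply le_antisymm
  · apply eqvGen_le
    rintro x y ⟨τ, hτ, rfl⟩
    rcases List.mem_cons.mp hτ with rfl | hτ
    · by_cases hxa : x = a
      · rw [hxa, Equiv.swap_apply_left]
        exact addPair_rel_ab _ a b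
      by_cases hxb : x = b
      · rw [hxb, Equiv.swap_apply_right]
        exact (addPair _ a b).symm (addPair_rel_ab _ a b)
      · rw [Equiv.swap_apply_of_ne_of_ne hxa hxb]
    · exact Setoid.le_def.mp (le_addPair _ a b) (EqvGen.rel _ _ ⟨τ, hτ, rfl⟩)
  · apply addPair_le
    · apply eqvGen_le
      rintro x y ⟨τ, hτ, rfl⟩
      exact EqvGen.rel _ _ ⟨τ, List.mem_cons_of_mem _ hτ, rfl⟩
    · exact EqvGen.rel _ _ ⟨Equiv.swap a b, List.mem_cons_self, Equiv.swap_apply_left a b⟩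

/-- Ree's inequality -/
lemma ree : ∀ (L : List (Perm Y)), (∀ t ∈ L, t.IsSwap) →
    Fintype.card Y + cycQ L.prod ≤ 2 * orbCount L + L.length := by
  intro L
  induction L with
  | nil =>
    intro _
    simp only [List.prod_nil, List.length_nil, cycQ_one, orbCount_nil]
    omega
  | cons t L' ih =>
    intro hsw
    obtain ⟨a, b, hab, rfl⟩ := hsw t List.mem_cons_self
    have IH := ih (fun τ hτ => hsw τ (List.mem_cons_of_mem _ hτ))
    have hcons : orbCount (Equiv.swap a b :: L') =
        Nat.card (Quotient (addPair (swapSetoid L') a b)) := by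
      rw [orbCount, swapSetoid_cons]
    rw [List.prod_cons, List.length_cons]
    by_cases hR : (swapSetoid L') a b
    · have heq : orbCount (Equiv.swap a b :: L') = orbCount L' := by
        rw [hcons, addPair_eq_self hR, orbCount]
      have hd : cycQ (Equiv.swap a b * L'.prod) ≤ cycQ L'.prod + 1 := by
        have := cycQ_le_swap_mul_add_one (Equiv.swap a b * L'.prod) a b
        rwa [Equiv.swap_mul_self_mul] at this
      omega
    · have hns : ¬ (L'.prod).SameCycle a b := fun hsc =>
        hR (rel_of_mem_stab (prod_mem_stab (fun τ hτ => hτ)) hsc)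
      have he : cycQ (Equiv.swap a b * L'.prod) ≤ cycQ L'.prod :=
        cycQ_swap_mul_le_of_not_sameCycle hns
      have hne : cycQ (Equiv.swap a b * L'.prod) ≠ cycQ L'.prod :=
        cycQ_swap_mul_ne hab
      have hA1 : orbCount L' ≤ Nat.card (Quotient (addPair (swapSetoid L') a b)) + 1 :=
        card_addPair_ge (swapSetoid L') a b
      omega

/-! ### Part E : bounded swap factorizations -/

lemma card_cycleType_ge {g : Perm Y} {n c : ℕ} (hn : g ^ n = 1) (h0 : 0 < n)
    (hsupp : n * c ≤ g.support.card) : c ≤ Multiset.card g.cycleType := by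
  have hentry : ∀ a ∈ g.cycleType, a ≤ n := fun a ha =>
    Nat.le_of_dvd h0 ((dvd_of_mem_cycleType ha).trans (orderOf_dvd_of_pow_eq_one hn))
  have hsum : g.cycleType.sum ≤ Multiset.card g.cycleType * n :=
    Multiset.sum_le_card_nsmul _ _ hentry
  rw [sum_cycleType] at hsum
  have h1 : c * n ≤ Multiset.card g.cycleType * n := by
    calc c * n = n * c := Nat.mul_comm _ _
    _ ≤ g.support.card := hsupp
    _ ≤ _ := hsum
  exact Nat.le_of_mul_le_mul_right h1 h0

lemma exists_bounded_swap_list {g : Perm Y} {n c : ℕ} (hn : g ^ n = 1) (h0 : 0 < n)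
    (hsupp : n * c ≤ g.support.card) :
    ∃ l : List (Perm Y), (∀ t ∈ l, t.IsSwap) ∧ l.prod = g ∧
      l.length + c ≤ g.support.card := by
  obtain ⟨l, hsw, hp, hlen⟩ := exists_swap_list g.support.card g le_rfl
  have hbr := cycQ_add_support g
  have hcc := card_cycleType_ge hn h0 hsupp
  have hsc : g.support.card ≤ Fintype.card Y := by
    simpa using Finset.card_le_card (Finset.subset_univ g.support)
  exact ⟨l, hsw, hp, by omega⟩

/-- digesting `fullCycleType` -/
lemma cycleType_of_fullCycleType {g : Perm Y} {M : Multiset ℕ} {r : ℕ}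
    (h : fullCycleType g = M + Multiset.replicate r 1) (hM : ∀ a ∈ M, 2 ≤ a) :
    g.cycleType = M := by
  classical
  have hrep : ∀ s : ℕ, (Multiset.replicate s (1 : ℕ)).filter (fun a => 2 ≤ a) = 0 :=
    fun s => Multiset.filter_eq_nil.mpr
      (fun a ha => by rw [Multiset.eq_of_mem_replicate ha]; omega)
  have h2 := congrArg (Multiset.filter (fun a => 2 ≤ a)) h
  rw [fullCycleType, Multiset.filter_add, Multiset.filter_add, hrep, hrep,
    Multiset.filter_eq_self.mpr (fun a ha => two_le_of_mem_cycleType ha),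
    Multiset.filter_eq_self.mpr hM] at h2
  simpa using h2

end Stmt14

/-! ### Part F : the hat construction -/

namespace Stmt14
section Hat

variable {X : Type*} [Fintype X] [DecidableEq X]
variable {A : Type*} [AddCommGroup A] [Fintype A] [DecidableEq A]

def hat (g : Perm X) (e : A) : Perm (X × A) := Equiv.prodCongr g (Equiv.addRight e)

lemma hat_apply (g : Perm X) (e : A) (p : X × A) : hat g e p = (g p.1, p.2 + e) := rfl

lemma hat_mul (g h : Perm X) (e f : A) : hat g e * hat h f = hat (g * h) (e + f) := by
  apply Equiv.ext
  rintro ⟨x, j⟩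
  show ((g (h x)), (j + f) + e) = ((g (h x)), j + (e + f))
  rw [add_assoc, add_comm f e]

lemma hat_one : hat (1 : Perm X) (0 : A) = 1 := by
  apply Equiv.ext
  rintro ⟨x, j⟩
  show ((x : X), j + 0) = (x, j)
  rw [add_zero]

lemma hat_pow (g : Perm X) (e : A) (n : ℕ) : (hat g e) ^ n = hat (g ^ n) (n • e) := by
  induction n with
  | zero => simpa using hat_one.symm
  | succ n ih =>
    rw [pow_succ, ih, hat_mul, ← pow_succ, succ_nsmul]

lemma hat_inv (g : Perm X) (e : A) : (hat g e)⁻¹ = hat g⁻¹ (-e) := by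
  apply inv_eq_of_mul_eq_one_right
  rw [hat_mul, mul_inv_cancel, add_neg_cancel, hat_one]

lemma hat_prod (l : List (Perm X × A)) :
    (l.map (fun p => hat p.1 p.2)).prod = hat (l.map Prod.fst).prod (l.map Prod.snd).sum := by
  induction l with
  | nil => simpa using hat_one.symm
  | cons p l ih =>
    simp only [List.map_cons, List.prod_cons, List.sum_cons, ih, hat_mul]

lemma hat_support_of_ne {e : A} (he : e ≠ 0) (g : Perm X) :
    (hat g e).support = Finset.univ := by
  apply Finset.eq_univ_iff_forall.mpr
  rintro ⟨x, j⟩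
  rw [Equiv.Perm.mem_support]
  intro hc
  have h2 : j + e = j := congrArg Prod.snd hc
  exact he (by rwa [add_eq_left] at h2)

lemma hat_support_zero (g : Perm X) :
    (hat g (0 : A)).support = g.support ×ˢ Finset.univ := by
  ext ⟨x, j⟩
  rw [Equiv.Perm.mem_support, Finset.mem_product]
  simp only [hat_apply, add_zero, Finset.mem_univ, and_true, Equiv.Perm.mem_support]
  constructor
  · intro h hgx
    exact h (by rw [hgx])
  · intro h hc
    exact h (congrArg Prod.fst hc)

end Hat

/-- sum of a 4-case if-chain over `Fin (n+3)` -/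
lemma sum_ifchain {M : Type*} [AddCommMonoid M] (n : ℕ) (a b c e : M) :
    (∑ i : Fin (n + 3), if (i : ℕ) = 0 then a else if (i : ℕ) = 1 then b
      else if (i : ℕ) = 2 then c else e) = a + b + c + n • e := by
  rw [Fin.sum_univ_eq_sum_range
    (fun p => if p = 0 then a else if p = 1 then b else if p = 2 then c else e)]
  induction n with
  | zero => simp [Finset.sum_range_succ, add_assoc]
  | succ n ih =>
    have h3 : n + 3 ≠ 0 := by omega
    have h4 : n + 3 ≠ 1 := by omega
    have h5 : n + 3 ≠ 2 := by omega
    rw [show n + 1 + 3 = (n + 3) + 1 from by omega, Finset.sum_range_succ, ih,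
      if_neg h3, if_neg h4, if_neg h5, succ_nsmul, ← add_assoc]

end Stmt14

namespace Stmt14

open Equiv Equiv.Perm Relation

theorem main (k m : ℕ) (hk : 2 ≤ k) (hm : 2 ≤ m) :
    ¬ realizable (k * m) (m + 1) (fun i =>
      if (i : ℕ) = 0 then Multiset.replicate m k
      else if (i : ℕ) = 1 then Multiset.replicate m k
      else if (i : ℕ) = 2 then {m + 1} + Multiset.replicate (k * m - m - 1) 1
      else {2} + Multiset.replicate (k * m - 2) 1) := by
  classical
  obtain ⟨m', rfl⟩ : ∃ m', m = m' + 2 := ⟨m - 2, by omega⟩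
  rintro ⟨τ, hprod, htrans, hct⟩
  haveI : NeZero k := ⟨by omega⟩
  haveI : Fact (1 < k) := ⟨by omega⟩
  set N := Fintype.card (Fin (k * (m' + 2)) × ZMod k) with hN
  have hNval : N = (k * (m' + 2)) * k := by
    rw [hN, Fintype.card_prod, Fintype.card_fin, ZMod.card]
  set ε : Fin (m' + 2 + 1) → ZMod k := fun i =>
    if (i : ℕ) = 0 then 1 else if (i : ℕ) = 1 then -1 else 0 with hε
  set τh : Fin (m' + 2 + 1) → Perm (Fin (k * (m' + 2)) × ZMod k) := fun i =>
    hat (τ i) (ε i) with hτh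
  -- digest cycle types
  have hct0' : ∀ i : Fin (m' + 2 + 1), (i : ℕ) = 0 →
      (τ i).cycleType = Multiset.replicate (m' + 2) k := by
    intro i hi
    have h := hct i
    beta_reduce at h
    rw [if_pos hi] at h
    refine cycleType_of_fullCycleType (r := 0) (by simpa using h) ?_
    intro a ha
    rw [Multiset.eq_of_mem_replicate ha]
    omega
  have hct1' : ∀ i : Fin (m' + 2 + 1), (i : ℕ) = 1 →
      (τ i).cycleType = Multiset.replicate (m' + 2) k := by
    intro i hi
    have h := hct i
    beta_reduce at h
    rw [hi] at h
    rw [if_neg (by omega), if_pos rfl] at h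
    refine cycleType_of_fullCycleType (r := 0) (by simpa using h) ?_
    intro a ha
    rw [Multiset.eq_of_mem_replicate ha]
    omega
  have hct2' : ∀ i : Fin (m' + 2 + 1), (i : ℕ) = 2 →
      (τ i).cycleType = {(m' + 2) + 1} := by
    intro i hi
    have h := hct i
    beta_reduce at h
    rw [hi] at h
    rw [if_neg (by omega), if_neg (by omega), if_pos rfl] at h
    refine cycleType_of_fullCycleType h ?_
    intro a ha
    rw [Multiset.mem_singleton.mp ha]
    omega
  have hctd : ∀ i : Fin (m' + 2 + 1), 2 < (i : ℕ) → (τ i).cycleType = {2} := by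
    intro i hi
    have h := hct i
    beta_reduce at h
    rw [if_neg (by omega), if_neg (by omega), if_neg (by omega)] at h
    refine cycleType_of_fullCycleType h ?_
    intro a ha
    rw [Multiset.mem_singleton.mp ha]
  -- bounds
  set Ci : Fin (m' + 2 + 1) → ℕ := fun i =>
    if (i : ℕ) = 0 then k * (m' + 2) else if (i : ℕ) = 1 then k * (m' + 2)
    else if (i : ℕ) = 2 then k else k with hCi
  set Si : Fin (m' + 2 + 1) → ℕ := fun i =>
    if (i : ℕ) = 0 then N else if (i : ℕ) = 1 then N
    else if (i : ℕ) = 2 then ((m' + 2) + 1) * k else 2 * k with hSi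
  have hswaps : ∀ i : Fin (m' + 2 + 1), ∃ l : List (Perm (Fin (k * (m' + 2)) × ZMod k)),
      (∀ t ∈ l, t.IsSwap) ∧ l.prod = τh i ∧ l.length + Ci i ≤ Si i := by
    intro i
    have key : ∀ (ct : Multiset ℕ) (n : ℕ), 0 < n → (τ i).cycleType = ct →
        (∀ b ∈ ct, b ∣ n) → (τ i) ^ n = 1 := by
      intro ct n hn hctt hdvd
      apply orderOf_dvd_iff_pow_eq_one.mp
      rw [← lcm_cycleType, hctt]
      exact Multiset.lcm_dvd.mpr hdvd
    by_cases h0 : (i : ℕ) = 0 ∨ (i : ℕ) = 1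
    · -- the two (k,...,k) permutations
      have hctr : (τ i).cycleType = Multiset.replicate (m' + 2) k := by
        rcases h0 with h0 | h0
        · exact hct0' i h0
        · exact hct1' i h0
      have hτpow : (τ i) ^ k = 1 := key _ k (by omega) hctr
        (fun b hb => by rw [Multiset.eq_of_mem_replicate hb])
      have hpow : (τh i) ^ k = 1 := by
        rw [hτh]
        beta_reduce
        beta_reduce
        rw [hat_pow, hτpow]
        have : (k • ε i) = 0 := by
          rw [nsmul_eq_mul, ZMod.natCast_self, zero_mul]
        rw [this, hat_one]
      have hεne : ε i ≠ 0 := by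
        rw [hε]
        beta_reduce
        rcases h0 with h0 | h0 <;> simp [h0]
      have hsupp : (τh i).support = Finset.univ := by
        rw [hτh]
        beta_reduce
        exact hat_support_of_ne hεne _
      have hsuppc : (τh i).support.card = N := by
        rw [hsupp, Finset.card_univ, hN]
      obtain ⟨l, h1, h2, h3⟩ := exists_bounded_swap_list hpow (show 0 < k by omega)
        (show k * (k * (m' + 2)) ≤ (τh i).support.card by
          rw [hsuppc, hNval]; exact le_of_eq (by ring))
      refine ⟨l, h1, h2, ?_⟩
      rw [hsuppc] at h3
      have hCval : Ci i = k * (m' + 2) := by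
        rw [hCi]
        beta_reduce
        rcases h0 with h0 | h0 <;> simp [h0]
      have hSval : Si i = N := by
        rw [hSi]
        beta_reduce
        rcases h0 with h0 | h0 <;> simp [h0]
      rw [hCval, hSval]
      exact h3
    · push_neg at h0
      have hε0 : ε i = 0 := by
        rw [hε]
        beta_reduce
        simp only [if_neg h0.1, if_neg h0.2]
      by_cases h2 : (i : ℕ) = 2
      · -- the (m+1)-cycle
        have hctr := hct2' i h2
        have hτpow : (τ i) ^ ((m' + 2) + 1) = 1 := key _ _ (by omega) hctr
          (fun b hb => by rw [Multiset.mem_singleton.mp hb])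
        have hpow : (τh i) ^ ((m' + 2) + 1) = 1 := by
          rw [hτh]
          beta_reduce
          beta_reduce
          rw [hat_pow, hτpow, hε0, smul_zero, hat_one]
        have hsuppc : (τh i).support.card = ((m' + 2) + 1) * k := by
          rw [hτh]
          beta_reduce
          beta_reduce
          rw [hε0, hat_support_zero, Finset.card_product, Finset.card_univ, ZMod.card,
            ← sum_cycleType, hctr, Multiset.sum_singleton]
        obtain ⟨l, h1, h2', h3⟩ := exists_bounded_swap_list hpow (show 0 < (m' + 2) + 1 by omega)
          (show ((m' + 2) + 1) * k ≤ (τh i).support.card by rw [hsuppc])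
        refine ⟨l, h1, h2', ?_⟩
        rw [hsuppc] at h3
        have hCval : Ci i = k := by
          rw [hCi]
          beta_reduce
          simp only [if_neg h0.1, if_neg h0.2, if_pos h2]
        have hSval : Si i = ((m' + 2) + 1) * k := by
          rw [hSi]
          beta_reduce
          simp only [if_neg h0.1, if_neg h0.2, if_pos h2]
        rw [hCval, hSval]
        exact h3
      · -- a transposition
        have hctr := hctd i (by omega)
        have hτpow : (τ i) ^ 2 = 1 := key _ _ (by omega) hctr
          (fun b hb => by rw [Multiset.mem_singleton.mp hb])
        have hpow : (τh i) ^ 2 = 1 := by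
          rw [hτh]
          beta_reduce
          beta_reduce
          rw [hat_pow, hτpow, hε0, smul_zero, hat_one]
        have hsuppc : (τh i).support.card = 2 * k := by
          rw [hτh]
          beta_reduce
          beta_reduce
          rw [hε0, hat_support_zero, Finset.card_product, Finset.card_univ, ZMod.card,
            ← sum_cycleType, hctr, Multiset.sum_singleton]
        obtain ⟨l, h1, h2', h3⟩ := exists_bounded_swap_list hpow (show 0 < 2 by omega)
          (show 2 * k ≤ (τh i).support.card by rw [hsuppc])
        refine ⟨l, h1, h2', ?_⟩
        rw [hsuppc] at h3
        have hCval : Ci i = k := by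
          rw [hCi]
          beta_reduce
          simp only [if_neg h0.1, if_neg h0.2, if_neg h2]
        have hSval : Si i = 2 * k := by
          rw [hSi]
          beta_reduce
          simp only [if_neg h0.1, if_neg h0.2, if_neg h2]
        rw [hCval, hSval]
        exact h3
  choose ls hsw hlp hll using hswaps
  set L := (List.ofFn ls).flatten with hL
  have hLsw : ∀ t ∈ L, t.IsSwap := by
    intro t ht
    rw [hL, List.mem_flatten] at ht
    obtain ⟨l, hl, htl⟩ := ht
    obtain ⟨i, rfl⟩ := List.mem_ofFn.mp hl
    exact hsw i t htl
  have hLprod : L.prod = 1 := by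
    rw [hL, List.prod_flatten]
    have h1 : (List.ofFn ls).map List.prod = List.ofFn τh := by
      rw [List.map_ofFn]
      exact congrArg List.ofFn (funext fun i => hlp i)
    rw [h1]
    have h2 : List.ofFn τh = (List.ofFn (fun i => (τ i, ε i))).map (fun p => hat p.1 p.2) := by
      rw [List.map_ofFn]
      rfl
    rw [h2, hat_prod, List.map_ofFn, List.map_ofFn]
    have h3 : (Prod.fst ∘ fun i => (τ i, ε i)) = τ := rfl
    have h4 : (Prod.snd ∘ fun i => (τ i, ε i)) = ε := rfl
    rw [h3, h4, hprod]
    have h5 : (List.ofFn ε).sum = 0 := by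
      rw [List.sum_ofFn]
      have hgen := sum_ifchain (M := ZMod k) m' 1 (-1) 0 0
      calc (∑ i : Fin (m' + 2 + 1), ε i)
          = ∑ i : Fin (m' + 3), (if (i : ℕ) = 0 then (1 : ZMod k) else if (i : ℕ) = 1 then -1
              else if (i : ℕ) = 2 then 0 else 0) := by
            apply Finset.sum_congr rfl
            intro i _
            rw [hε]
            beta_reduce
            by_cases ha : (i : ℕ) = 0
            · rw [if_pos ha, if_pos ha]
            rw [if_neg ha, if_neg ha]
            by_cases hb : (i : ℕ) = 1
            · rw [if_pos hb, if_pos hb]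
            rw [if_neg hb, if_neg hb]
            by_cases hc : (i : ℕ) = 2
            · rw [if_pos hc]
            · rw [if_neg hc]
        _ = 1 + -1 + 0 + m' • (0 : ZMod k) := hgen
        _ = 0 := by simp
    rw [h5, hat_one]
  -- Ree
  have hree := ree L hLsw
  rw [hLprod, cycQ_one, ← hN] at hree
  have hlen : L.length = ∑ i, (ls i).length := by
    rw [hL, List.length_flatten, List.map_ofFn, List.sum_ofFn]
    rfl
  have hsum1 : (∑ i, (ls i).length) + (∑ i, Ci i) ≤ ∑ i, Si i := by
    rw [← Finset.sum_add_distrib]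
    exact Finset.sum_le_sum (fun i _ => hll i)
  have hCsum : (∑ i, Ci i) = k * (m' + 2) + k * (m' + 2) + k + m' * k := by
    rw [hCi]
    beta_reduce
    have := sum_ifchain (M := ℕ) m' (k * (m' + 2)) (k * (m' + 2)) k k
    rw [smul_eq_mul] at this
    exact this
  have hSsum : (∑ i, Si i) = N + N + ((m' + 2) + 1) * k + m' * (2 * k) := by
    rw [hSi]
    beta_reduce
    have := sum_ifchain (M := ℕ) m' N N (((m' + 2) + 1) * k) (2 * k)
    rw [smul_eq_mul] at this
    exact this
  have horb : k ≤ orbCount L := by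
    have e1 : ((m' + 2) + 1) * k = m' * k + 3 * k := by ring
    have e2 : k * (m' + 2) = m' * k + 2 * k := by ring
    have e3 : m' * (2 * k) = 2 * (m' * k) := by ring
    omega
  -- stabilization and transitivity
  have hstab : ∀ i, τh i ∈ setoidStab (swapSetoid L) := by
    intro i
    have hmem : ∀ t ∈ ls i, t ∈ L := by
      intro t ht
      rw [hL, List.mem_flatten]
      exact ⟨ls i, List.mem_ofFn.mpr ⟨i, rfl⟩, ht⟩
    have := prod_mem_stab hmem
    rwa [hlp i] at this
  have hτmem : ∀ (i : Fin (m' + 2 + 1)) (x : Fin (k * (m' + 2))) (j : ZMod k),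
      (swapSetoid L) (x, j) (τ i x, j + ε i) :=
    fun i x j => hstab i (x, j)
  have hτmem' : ∀ (i : Fin (m' + 2 + 1)) (x : Fin (k * (m' + 2))) (j : ZMod k),
      (swapSetoid L) (x, j) ((τ i)⁻¹ x, j + (- ε i)) := by
    intro i x j
    have h1 : (τh i)⁻¹ ∈ setoidStab (swapSetoid L) := inv_mem (hstab i)
    have h2 := h1 (x, j)
    have h3 : (τh i)⁻¹ = hat (τ i)⁻¹ (- ε i) := by
      rw [hτh]
      beta_reduce
      beta_reduce
      rw [hat_inv]
    rwa [h3] at h2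
  have htr' : ∀ (x y : Fin (k * (m' + 2))) (j : ZMod k),
      ∃ j', (swapSetoid L) (x, j) (y, j') := by
    intro x y j
    obtain ⟨g, hg, hgx⟩ := htrans x y
    let Str : Subgroup (Perm (Fin (k * (m' + 2)))) :=
      { carrier := {g | (∀ x j, ∃ j', (swapSetoid L) (x, j) (g x, j')) ∧
          (∀ x j, ∃ j', (swapSetoid L) (x, j) (g⁻¹ x, j'))}
        one_mem' := ⟨fun x j => ⟨j, (swapSetoid L).refl _⟩,
          fun x j => ⟨j, by rw [inv_one]; exact (swapSetoid L).refl _⟩⟩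
        mul_mem' := by
          rintro g h ⟨hg1, hg2⟩ ⟨hh1, hh2⟩
          constructor
          · intro x j
            obtain ⟨j1, p1⟩ := hh1 x j
            obtain ⟨j2, p2⟩ := hg1 (h x) j1
            exact ⟨j2, (swapSetoid L).trans p1 p2⟩
          · intro x j
            obtain ⟨j1, p1⟩ := hg2 x j
            obtain ⟨j2, p2⟩ := hh2 (g⁻¹ x) j1
            refine ⟨j2, (swapSetoid L).trans p1 ?_⟩
            rw [mul_inv_rev]
            exact p2
        inv_mem' := by
          rintro g ⟨hg1, hg2⟩
          refine ⟨hg2, ?_⟩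
          intro x j
          rw [inv_inv]
          exact hg1 x j }
    have hcl : Subgroup.closure (Set.range τ) ≤ Str := by
      rw [Subgroup.closure_le]
      rintro g' ⟨i, rfl⟩
      exact ⟨fun x j => ⟨j + ε i, hτmem i x j⟩, fun x j => ⟨j + (- ε i), hτmem' i x j⟩⟩
    obtain ⟨j', hj'⟩ := (hcl hg).1 x j
    exact ⟨j', by rwa [hgx] at hj'⟩
  -- fibers of the quotient
  have hfibge : ∀ q : Quotient (swapSetoid L), k * (m' + 2) ≤
      (Finset.univ.filter (fun p => Quotient.mk (swapSetoid L) p = q)).card := by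
    intro q
    obtain ⟨p, rfl⟩ := Quotient.exists_rep q
    have hmap : ∀ y : Fin (k * (m' + 2)), ∃ j',
        ((y, j') : Fin (k * (m' + 2)) × ZMod k) ∈ Finset.univ.filter
          (fun p' => Quotient.mk (swapSetoid L) p' = Quotient.mk (swapSetoid L) p) := by
      intro y
      obtain ⟨j', hj'⟩ := htr' p.1 y p.2
      refine ⟨j', Finset.mem_filter.mpr ⟨Finset.mem_univ _, Quotient.sound' ?_⟩⟩
      exact (swapSetoid L).symm hj'
    choose jf hjf using hmap
    have hinj : Set.InjOn (fun y => ((y, jf y) : Fin (k * (m' + 2)) × ZMod k))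
        (Finset.univ : Finset (Fin (k * (m' + 2)))) := by
      intro y1 _ y2 _ h
      exact congrArg Prod.fst h
    have := Finset.card_le_card_of_injOn _ (fun y _ => hjf y) hinj
    simpa using this
  have htot : ∑ q : Quotient (swapSetoid L),
      (Finset.univ.filter (fun p => Quotient.mk (swapSetoid L) p = q)).card = N := by
    have h := Finset.card_eq_sum_card_fiberwise
      (fun (p : Fin (k * (m' + 2)) × ZMod k) (_ : p ∈ Finset.univ) =>
        Finset.mem_univ (Quotient.mk (swapSetoid L) p))
    rw [Finset.card_univ] at h
    rw [← h]
  have hQub : Fintype.card (Quotient (swapSetoid L)) ≤ k := by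
    have hub : Fintype.card (Quotient (swapSetoid L)) * (k * (m' + 2)) ≤ N := by
      calc Fintype.card (Quotient (swapSetoid L)) * (k * (m' + 2))
          = ∑ _q : Quotient (swapSetoid L), (k * (m' + 2)) := by
            rw [Finset.sum_const, Finset.card_univ, smul_eq_mul]
        _ ≤ _ := Finset.sum_le_sum (fun q _ => hfibge q)
        _ = N := htot
    have hpos : 0 < k * (m' + 2) := Nat.mul_pos (by omega) (by omega)
    have : Fintype.card (Quotient (swapSetoid L)) * (k * (m' + 2)) ≤ k * (k * (m' + 2)) := by
      rw [hNval] at hub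
      calc Fintype.card (Quotient (swapSetoid L)) * (k * (m' + 2)) ≤ (k * (m' + 2)) * k := hub
        _ = k * (k * (m' + 2)) := by ring
    exact Nat.le_of_mul_le_mul_right this hpos
  have hQcard : Fintype.card (Quotient (swapSetoid L)) = k := by
    have hlb : k ≤ Fintype.card (Quotient (swapSetoid L)) := by
      rw [← Nat.card_eq_fintype_card]
      exact horb
    omega
  have hfibeq : ∀ q : Quotient (swapSetoid L),
      (Finset.univ.filter (fun p => Quotient.mk (swapSetoid L) p = q)).card = k * (m' + 2) := by
    by_contra hcon
    push_neg at hcon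
    obtain ⟨q0, hq0⟩ := hcon
    have hstrict : (∑ _q : Quotient (swapSetoid L), k * (m' + 2)) <
        ∑ q : Quotient (swapSetoid L),
          (Finset.univ.filter (fun p => Quotient.mk (swapSetoid L) p = q)).card :=
      Finset.sum_lt_sum (fun q _ => hfibge q)
        ⟨q0, Finset.mem_univ _, lt_of_le_of_ne (hfibge q0) (Ne.symm hq0)⟩
    rw [htot, Finset.sum_const, Finset.card_univ, smul_eq_mul, hQcard, hNval] at hstrict
    have : k * (k * (m' + 2)) = (k * (m' + 2)) * k := by ring
    omega
  -- extract the level function ψ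
  have hdpos : 0 < k * (m' + 2) := Nat.mul_pos (by omega) (by omega)
  set p0 : Fin (k * (m' + 2)) × ZMod k := (⟨0, hdpos⟩, 0) with hp0
  set O := Finset.univ.filter
    (fun p => Quotient.mk (swapSetoid L) p = Quotient.mk (swapSetoid L) p0) with hO
  have hOcard : O.card = k * (m' + 2) := hfibeq _
  have hOy : ∀ y : Fin (k * (m' + 2)), ∃ j, ((y, j) : Fin (k * (m' + 2)) × ZMod k) ∈ O := by
    intro y
    obtain ⟨j', hj'⟩ := htr' p0.1 y p0.2
    refine ⟨j', Finset.mem_filter.mpr ⟨Finset.mem_univ _, Quotient.sound' ?_⟩⟩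
    exact (swapSetoid L).symm hj'
  have hinjO : Set.InjOn Prod.fst (O : Set (Fin (k * (m' + 2)) × ZMod k)) := by
    apply Finset.card_image_iff.mp
    have himg : O.image Prod.fst = Finset.univ := by
      apply Finset.eq_univ_iff_forall.mpr
      intro y
      obtain ⟨j, hj⟩ := hOy y
      exact Finset.mem_image.mpr ⟨(y, j), hj, rfl⟩
    rw [himg, Finset.card_univ, Fintype.card_fin, hOcard]
  choose ψ hψ using hOy
  have huniq : ∀ y j, ((y, j) : Fin (k * (m' + 2)) × ZMod k) ∈ O → j = ψ y := by
    intro y j hyj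
    have h := hinjO hyj (hψ y) rfl
    exact congrArg Prod.snd h
  have hstep : ∀ (i : Fin (m' + 2 + 1)) (y : Fin (k * (m' + 2))),
      ψ (τ i y) = ψ y + ε i := by
    intro i y
    have h1 : ((y, ψ y) : Fin (k * (m' + 2)) × ZMod k) ∈ O := hψ y
    have h2 : ((τ i y, ψ y + ε i) : Fin (k * (m' + 2)) × ZMod k) ∈ O := by
      rw [hO, Finset.mem_filter] at h1 ⊢
      refine ⟨Finset.mem_univ _, ?_⟩
      have h3 : Quotient.mk (swapSetoid L) ((τ i y, ψ y + ε i) : Fin (k * (m' + 2)) × ZMod k)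
          = Quotient.mk (swapSetoid L) ((y, ψ y) : Fin (k * (m' + 2)) × ZMod k) :=
        Quotient.sound' ((swapSetoid L).symm (hτmem i y (ψ y)))
      rw [h3, h1.2]
    exact (huniq _ _ h2).symm
  -- class sizes are all equal to m'+2
  have hstep0 : ∀ y, ψ (τ 0 y) = ψ y + 1 := by
    intro y
    have h := hstep 0 y
    have hε0 : ε 0 = 1 := by
      rw [hε]
      beta_reduce
      beta_reduce
      rw [if_pos (by simp)]
    rwa [hε0] at h
  have hpowstep : ∀ (t : ℕ) (y : Fin (k * (m' + 2))), ψ ((τ 0 ^ t) y) = ψ y + (t : ZMod k) := by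
    intro t
    induction t with
    | zero => intro y; simp
    | succ t ih =>
      intro y
      rw [pow_succ, Equiv.Perm.mul_apply, ih (τ 0 y), hstep0 y]
      push_cast
      ring
  set Sj : ZMod k → Finset (Fin (k * (m' + 2))) := fun j =>
    Finset.univ.filter (fun y => ψ y = j) with hSj
  have hSle : ∀ j j' : ZMod k, (Sj j).card ≤ (Sj j').card := by
    intro j j'
    apply Finset.card_le_card_of_injOn (fun y => (τ 0 ^ ((j' - j).val)) y)
    · intro y hy
      rw [hSj] at hy ⊢
      simp only [Finset.mem_coe, Finset.mem_filter] at hy ⊢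
      refine ⟨Finset.mem_univ _, ?_⟩
      rw [hpowstep _ y, hy.2, ZMod.natCast_rightInverse (j' - j)]
      ring
    · intro y1 _ y2 _ h
      exact (Equiv.injective _) h
  have hfib2 : ∑ j : ZMod k, (Sj j).card = k * (m' + 2) := by
    rw [hSj]
    beta_reduce
    have h := Finset.card_eq_sum_card_fiberwise
      (fun (y : Fin (k * (m' + 2))) (_ : y ∈ Finset.univ) => Finset.mem_univ (ψ y))
    rw [Finset.card_univ, Fintype.card_fin] at h
    exact h.symm
  have hSconst : ∀ j, (Sj j).card = m' + 2 := by
    have hc : ∀ j, (Sj j).card = (Sj 0).card := fun j => le_antisymm (hSle j 0) (hSle 0 j)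
    have hsum : ∑ _j : ZMod k, (Sj 0).card = k * (m' + 2) := by
      calc ∑ _j : ZMod k, (Sj 0).card = ∑ j : ZMod k, (Sj j).card :=
            Finset.sum_congr rfl (fun j _ => (hc j).symm)
        _ = k * (m' + 2) := hfib2
    rw [Finset.sum_const, Finset.card_univ, ZMod.card, smul_eq_mul] at hsum
    intro j
    rw [hc j]
    exact Nat.eq_of_mul_eq_mul_left (by omega) hsum
  -- the (m+1)-cycle lives in a single level set
  set i2 : Fin (m' + 2 + 1) := ⟨2, by omega⟩ with hi2
  have hγct : (τ i2).cycleType = {(m' + 2) + 1} := hct2' i2 rfl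
  have hγcyc : (τ i2).IsCycle := card_cycleType_eq_one.mp (by rw [hγct]; rfl)
  obtain ⟨x0, hx0, hcyc⟩ := hγcyc
  have hψγ : ∀ y, ψ (τ i2 y) = ψ y := by
    intro y
    have h := hstep i2 y
    have hεi2 : ε i2 = 0 := by
      have hv : (i2 : ℕ) = 2 := rfl
      rw [hε]
      beta_reduce
      rw [hv]
      norm_num
    rwa [hεi2, add_zero] at h
  have hψγinv : ∀ y, ψ ((τ i2)⁻¹ y) = ψ y := by
    intro y
    have h := hψγ ((τ i2)⁻¹ y)
    rw [← Equiv.Perm.mul_apply, mul_inv_cancel, Equiv.Perm.one_apply] at h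
    exact h.symm
  have hψγpow : ∀ (n : ℕ) (y : Fin (k * (m' + 2))), ψ (((τ i2) ^ n) y) = ψ y := by
    intro n
    induction n with
    | zero => intro y; simp
    | succ n ih =>
      intro y
      rw [pow_succ, Equiv.Perm.mul_apply, ih (τ i2 y), hψγ y]
  have hψγipow : ∀ (n : ℕ) (y : Fin (k * (m' + 2))), ψ ((((τ i2)⁻¹) ^ n) y) = ψ y := by
    intro n
    induction n with
    | zero => intro y; simp
    | succ n ih =>
      intro y
      rw [pow_succ, Equiv.Perm.mul_apply, ih ((τ i2)⁻¹ y), hψγinv y]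
  have hψγz : ∀ (i : ℤ) (y : Fin (k * (m' + 2))), ψ (((τ i2) ^ i) y) = ψ y := by
    intro i y
    match i with
    | Int.ofNat n =>
      rw [Int.ofNat_eq_coe, zpow_natCast]
      exact hψγpow n y
    | Int.negSucc n =>
      rw [zpow_negSucc, ← inv_pow]
      exact hψγipow (n + 1) y
  have hsubset : (τ i2).support ⊆ Sj (ψ x0) := by
    intro y hy
    obtain ⟨i, hi⟩ := hcyc (Equiv.Perm.mem_support.mp hy)
    rw [hSj]
    beta_reduce
    simp only [Finset.mem_filter]
    exact ⟨Finset.mem_univ _, by rw [← hi, hψγz]⟩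
  have hscard : (τ i2).support.card = (m' + 2) + 1 := by
    rw [← sum_cycleType, hγct, Multiset.sum_singleton]
  have hfin := Finset.card_le_card hsubset
  rw [hscard, hSconst] at hfin
  omega

end Stmt14

/-- first exceptional series of Section 1. For `k, m ≥ 2`,
`d = km`, `n = m + 1`, the partitions `(k,…,k)`, `(k,…,k)`,
`(m+1,1,…,1)`, and `m − 2` copies of `(2,1,…,1)` are not realized by
permutations. -/
theorem stmt14 (k m : ℕ) (hk : 2 ≤ k) (hm : 2 ≤ m) :
    ¬ realizable (k * m) (m + 1) (fun i =>
      if (i : ℕ) = 0 then Multiset.replicate m k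
      else if (i : ℕ) = 1 then Multiset.replicate m k
      else if (i : ℕ) = 2 then {m + 1} + Multiset.replicate (k * m - m - 1) 1
      else {2} + Multiset.replicate (k * m - 2) 1) := by
  exact Stmt14.main k m hk hm
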